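/- arXiv:1109.0417 — 2 statements merged into one kernel-verified Lean document; each statement's English description precedes it below -/
import Mathlib

section
/- For n ≥ 2, B_n ≤ B_{n-1} + B̃_{n+1}. -/
/-- A set partition of `Fin n`, modelled as a finite set of blocks. -/
def IsSetPartition {n : ℕ} (P : Finset (Finset (Fin n))) : Prop :=
  (∀ b ∈ P, b.Nonempty) ∧ (∀ b ∈ P, ∀ c ∈ P, b ≠ c → Disjoint b c) ∧
    P.sup id = Finset.univ

/-- The `n`-th Bell number: the number of set partitions of an `n`-element set. -/
noncomputable def bell (n : ℕ) : ℕ :=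
  Set.ncard {P : Finset (Finset (Fin n)) | IsSetPartition P}

/-- The number of singleton-free set partitions of an `n`-element set. -/
noncomputable def bellT (n : ℕ) : ℕ :=
  Set.ncard {P : Finset (Finset (Fin n)) | IsSetPartition P ∧ ∀ b ∈ P, 2 ≤ b.card}

namespace BellAux
open Finset

variable {m : ℕ}

/-- retraction of `Fin.castSucc`. -/
def g1 (m : ℕ) (x : Fin (m+2)) : Fin (m+1) := ⟨min x.val m, by omega⟩

lemma g1_castSucc (x : Fin (m+1)) : g1 m x.castSucc = x := by
  have := x.isLt
  apply Fin.ext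
  simp only [g1, Fin.coe_castSucc]
  omega

lemma castSucc_g1 {x : Fin (m+2)} (hx : x ≠ Fin.last (m+1)) : (g1 m x).castSucc = x := by
  have h1 := x.isLt
  have h2 : x.val ≠ m + 1 := fun h => hx (Fin.ext h)
  apply Fin.ext
  simp only [g1, Fin.coe_castSucc]
  omega

/-- first injection: remove the singleton block `{last}`. -/
def f1 (m : ℕ) (P : Finset (Finset (Fin (m+2)))) : Finset (Finset (Fin (m+1))) :=
  (P.erase {Fin.last (m+1)}).image (fun b => b.image (g1 m))

lemma exists_block {P : Finset (Finset (Fin (m+2)))} (hP : IsSetPartition P)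
    (x : Fin (m+2)) : ∃ b ∈ P, x ∈ b := by
  have : x ∈ P.sup id := by rw [hP.2.2]; exact Finset.mem_univ x
  simpa [Finset.mem_sup] using this

lemma last_not_mem {P : Finset (Finset (Fin (m+2)))} (hP : IsSetPartition P)
    (hL : ({Fin.last (m+1)} : Finset (Fin (m+2))) ∈ P) {b : Finset (Fin (m+2))}
    (hb : b ∈ P) (hne : b ≠ {Fin.last (m+1)}) : Fin.last (m+1) ∉ b := by
  intro h
  exact (Finset.disjoint_left.mp (hP.2.1 b hb _ hL hne) h) (Finset.mem_singleton_self _)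

lemma f1_mapsTo {P : Finset (Finset (Fin (m+2)))} (hP : IsSetPartition P)
    (hL : ({Fin.last (m+1)} : Finset (Fin (m+2))) ∈ P) : IsSetPartition (f1 m P) := by
  obtain ⟨hne, hdis, hsup⟩ := hP
  refine ⟨?_, ?_, ?_⟩
  · intro b' hb'
    simp only [f1, Finset.mem_image, Finset.mem_erase] at hb'
    obtain ⟨b, ⟨hbne, hb⟩, rfl⟩ := hb'
    exact (hne b hb).image _
  · intro b' hb' c' hc' hne'
    simp only [f1, Finset.mem_image, Finset.mem_erase] at hb' hc'
    obtain ⟨b, ⟨hbne, hb⟩, rfl⟩ := hb'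
    obtain ⟨c, ⟨hcne, hc⟩, rfl⟩ := hc'
    have hbc : b ≠ c := fun h => hne' (by rw [h])
    have hd := hdis b hb c hc hbc
    rw [Finset.disjoint_left]
    intro a hab hac
    obtain ⟨x, hx, rfl⟩ := Finset.mem_image.mp hab
    obtain ⟨y, hy, hxy⟩ := Finset.mem_image.mp hac
    have hxl : x ≠ Fin.last (m+1) := fun h => last_not_mem ⟨hne, hdis, hsup⟩ hL hb hbne (h ▸ hx)
    have hyl : y ≠ Fin.last (m+1) := fun h => last_not_mem ⟨hne, hdis, hsup⟩ hL hc hcne (h ▸ hy)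
    have hyx : y = x := by
      have := congrArg Fin.castSucc hxy
      rwa [castSucc_g1 hyl, castSucc_g1 hxl] at this
    exact Finset.disjoint_left.mp hd hx (hyx ▸ hy)
  · rw [Finset.eq_univ_iff_forall]
    intro x
    obtain ⟨b, hb, hxb⟩ := exists_block ⟨hne, hdis, hsup⟩ x.castSucc
    have hbne : b ≠ {Fin.last (m+1)} := by
      rintro rfl
      exact (Fin.castSucc_lt_last x).ne (Finset.mem_singleton.mp hxb)
    rw [Finset.mem_sup]
    refine ⟨b.image (g1 m), ?_, ?_⟩
    · exact Finset.mem_image_of_mem _ (Finset.mem_erase.mpr ⟨hbne, hb⟩)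
    · simpa [id] using Finset.mem_image.mpr ⟨x.castSucc, hxb, g1_castSucc x⟩

/-- left inverse of `f1`. -/
def inv1 (m : ℕ) (Q : Finset (Finset (Fin (m+1)))) : Finset (Finset (Fin (m+2))) :=
  Q.image (fun c => c.image Fin.castSucc) ∪ {{Fin.last (m+1)}}

lemma inv1_f1 {P : Finset (Finset (Fin (m+2)))} (hP : IsSetPartition P)
    (hL : ({Fin.last (m+1)} : Finset (Fin (m+2))) ∈ P) : inv1 m (f1 m P) = P := by
  have key : ∀ b ∈ P.erase {Fin.last (m+1)},
      (b.image (g1 m)).image Fin.castSucc = b := by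
    intro b hb
    rw [Finset.mem_erase] at hb
    rw [Finset.image_image]
    ext y
    simp only [Finset.mem_image, Function.comp_apply]
    constructor
    · rintro ⟨x, hx, rfl⟩
      have hxl : x ≠ Fin.last (m+1) := fun h =>
        last_not_mem hP hL hb.2 hb.1 (h ▸ hx)
      rwa [castSucc_g1 hxl]
    · intro hy
      have hyl : y ≠ Fin.last (m+1) := fun h =>
        last_not_mem hP hL hb.2 hb.1 (h ▸ hy)
      exact ⟨y, hy, castSucc_g1 hyl⟩
  rw [inv1, f1, Finset.image_image]
  simp only [Function.comp_def]
  rw [Finset.image_congr (fun b hb => key b hb), Finset.image_id']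
  rw [Finset.union_comm]
  show insert {Fin.last (m+1)} (P.erase {Fin.last (m+1)}) = P
  exact Finset.insert_erase hL


/-- preimage under `Fin.castSucc`. -/
def pre (m : ℕ) (c : Finset (Fin (m+3))) : Finset (Fin (m+2)) :=
  Finset.univ.filter (fun y => y.castSucc ∈ c)

lemma mem_pre {c : Finset (Fin (m+3))} {y : Fin (m+2)} : y ∈ pre m c ↔ y.castSucc ∈ c := by
  simp [pre]

lemma pre_image (b : Finset (Fin (m+2))) : pre m (b.image Fin.castSucc) = b := by
  ext y
  simp [mem_pre, Fin.castSucc_inj]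

lemma pre_union (c d : Finset (Fin (m+3))) : pre m (c ∪ d) = pre m c ∪ pre m d := by
  ext y
  simp [mem_pre]

lemma pre_last : pre m {Fin.last (m+2)} = ∅ := by
  ext y
  simp [mem_pre, (Fin.castSucc_lt_last y).ne]

lemma last_not_mem_image (b : Finset (Fin (m+2))) :
    Fin.last (m+2) ∉ b.image Fin.castSucc := by
  intro h
  obtain ⟨x, _, hx⟩ := Finset.mem_image.mp h
  exact (Fin.castSucc_lt_last x).ne hx

/-- union of the singleton blocks. -/
def T (m : ℕ) (P : Finset (Finset (Fin (m+2)))) : Finset (Fin (m+2)) :=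
  (P.filter (fun b => b.card = 1)).sup id

lemma mem_T {P : Finset (Finset (Fin (m+2)))} {x : Fin (m+2)} :
    x ∈ T m P ↔ ({x} : Finset (Fin (m+2))) ∈ P := by
  simp only [T, Finset.mem_sup, Finset.mem_filter, id]
  constructor
  · rintro ⟨b, ⟨hb, hcard⟩, hx⟩
    obtain ⟨a, rfl⟩ := Finset.card_eq_one.mp hcard
    rw [Finset.mem_singleton.mp hx]
    exact hb
  · intro h
    exact ⟨{x}, ⟨h, Finset.card_singleton x⟩, Finset.mem_singleton_self x⟩

/-- second injection: into singleton-free partitions of `Fin (m+3)`. -/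
def f2 (m : ℕ) (P : Finset (Finset (Fin (m+2)))) : Finset (Finset (Fin (m+3))) :=
  if P.filter (fun b => b.card = 1) = ∅ then
    P.image (fun b => if Fin.last (m+1) ∈ b then
      b.image Fin.castSucc ∪ {Fin.last (m+2)} else b.image Fin.castSucc)
  else
    (P.filter (fun b => 2 ≤ b.card)).image (fun b => b.image Fin.castSucc) ∪
      {(T m P).image Fin.castSucc ∪ {Fin.last (m+2)}}

lemma block_unique {P : Finset (Finset (Fin (m+2)))} (hP : IsSetPartition P)
    {b c : Finset (Fin (m+2))} {x : Fin (m+2)} (hb : b ∈ P) (hc : c ∈ P)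
    (hxb : x ∈ b) (hxc : x ∈ c) : b = c := by
  by_contra hne
  exact Finset.disjoint_left.mp (hP.2.1 b hb c hc hne) hxb hxc

lemma f2_mapsTo {P : Finset (Finset (Fin (m+2)))} (hP : IsSetPartition P)
    (hS : ({Fin.last (m+1)} : Finset (Fin (m+2))) ∉ P) :
    IsSetPartition (f2 m P) ∧ ∀ b ∈ f2 m P, 2 ≤ b.card := by
  by_cases hE : P.filter (fun b => b.card = 1) = ∅
  · -- no singleton blocks: add the new top element to the block of `last`
    have hcard2 : ∀ b ∈ P, 2 ≤ b.card := by
      intro b hb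
      have h1 : 0 < b.card := (hP.1 b hb).card_pos
      have h2 : ¬ b.card = 1 := by
        intro h
        have : b ∈ P.filter (fun b => b.card = 1) := Finset.mem_filter.mpr ⟨hb, h⟩
        simp [hE] at this
      omega
    set h : Finset (Fin (m+2)) → Finset (Fin (m+3)) := fun b =>
      if Fin.last (m+1) ∈ b then b.image Fin.castSucc ∪ {Fin.last (m+2)}
      else b.image Fin.castSucc with hh
    have hf2 : f2 m P = P.image h := by rw [f2, if_pos hE]
    have hmem : ∀ (a : Fin (m+3)) (b : Finset (Fin (m+2))),
        a ∈ h b ↔ a ∈ b.image Fin.castSucc ∨ (a = Fin.last (m+2) ∧ Fin.last (m+1) ∈ b) := by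
      intro a b
      rw [hh]
      dsimp only
      split_ifs with hl
      · simp [Finset.mem_union, hl, or_comm]
      · simp [hl]
    have hc : ∀ b' ∈ P.image h, 2 ≤ b'.card := by
      rintro b' hb'
      obtain ⟨b, hb, rfl⟩ := Finset.mem_image.mp hb'
      have hsub : b.image Fin.castSucc ⊆ h b := by
        rw [hh]
        dsimp only
        split_ifs
        · exact Finset.subset_union_left
        · exact Finset.Subset.refl _
      calc 2 ≤ b.card := hcard2 b hb
        _ = (b.image Fin.castSucc).card :=
          (Finset.card_image_of_injective _ (Fin.castSucc_injective _)).symm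
        _ ≤ (h b).card := Finset.card_le_card hsub
    rw [hf2]
    refine ⟨⟨fun b' hb' => Finset.card_pos.mp (by have := hc b' hb'; omega), ?_, ?_⟩, hc⟩
    · rintro b' hb' c' hc' hne'
      obtain ⟨b, hb, rfl⟩ := Finset.mem_image.mp hb'
      obtain ⟨c, hcmem, rfl⟩ := Finset.mem_image.mp hc'
      have hbc : b ≠ c := fun e => hne' (by rw [e])
      rw [Finset.disjoint_left]
      intro a hab hac
      rcases (hmem a b).mp hab with h1 | ⟨rfl, h1⟩
      · rcases (hmem a c).mp hac with h2 | ⟨rfl, h2⟩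
        · obtain ⟨x, hx, rfl⟩ := Finset.mem_image.mp h1
          obtain ⟨y, hy, hyx⟩ := Finset.mem_image.mp h2
          have hyx' : y = x := Fin.castSucc_inj.mp hyx
          exact Finset.disjoint_left.mp (hP.2.1 b hb c hcmem hbc) hx (hyx' ▸ hy)
        · exact last_not_mem_image b h1
      · rcases (hmem _ c).mp hac with h2 | ⟨_, h2⟩
        · exact last_not_mem_image c h2
        · exact hbc (block_unique hP hb hcmem h1 h2)
    · rw [Finset.eq_univ_iff_forall]
      intro x
      rw [Finset.mem_sup]
      rcases x.eq_castSucc_or_eq_last with ⟨y, rfl⟩ | rfl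
      · obtain ⟨b, hb, hyb⟩ := exists_block hP y
        exact ⟨h b, Finset.mem_image_of_mem h hb,
          (hmem _ b).mpr (Or.inl (Finset.mem_image_of_mem _ hyb))⟩
      · obtain ⟨b, hb, hlb⟩ := exists_block hP (Fin.last (m+1))
        exact ⟨h b, Finset.mem_image_of_mem h hb, (hmem _ b).mpr (Or.inr ⟨rfl, hlb⟩)⟩
  · -- there is a singleton block: merge all singletons with the new top element
    have hTne : (T m P).Nonempty := by
      obtain ⟨b0, hb0⟩ := Finset.nonempty_of_ne_empty hE
      have hb0' := Finset.mem_filter.mp hb0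
      obtain ⟨x0, rfl⟩ := Finset.card_eq_one.mp hb0'.2
      exact ⟨x0, mem_T.mpr hb0'.1⟩
    set B : Finset (Fin (m+3)) := (T m P).image Fin.castSucc ∪ {Fin.last (m+2)} with hB
    have hf2 : f2 m P =
        (P.filter (fun b => 2 ≤ b.card)).image (fun b => b.image Fin.castSucc) ∪ {B} := by
      rw [f2, if_neg hE]
    have hmemQ : ∀ c', c' ∈ f2 m P ↔
        (∃ b ∈ P, 2 ≤ b.card ∧ b.image Fin.castSucc = c') ∨ c' = B := by
      intro c'
      rw [hf2]
      simp only [Finset.mem_union, Finset.mem_image, Finset.mem_filter,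
        Finset.mem_singleton, and_assoc]
    have cross : ∀ b ∈ P, 2 ≤ b.card → ∀ a, a ∈ b.image Fin.castSucc → a ∈ B → False := by
      intro b hb hb2 a ha1 ha2
      obtain ⟨x, hx, rfl⟩ := Finset.mem_image.mp ha1
      rcases Finset.mem_union.mp ha2 with hu | hu
      · obtain ⟨t, ht, hteq⟩ := Finset.mem_image.mp hu
        have htx : t = x := Fin.castSucc_inj.mp hteq
        have hxP : ({x} : Finset (Fin (m+2))) ∈ P := mem_T.mp (htx ▸ ht)
        have := block_unique hP hb hxP hx (Finset.mem_singleton_self x)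
        rw [this, Finset.card_singleton] at hb2
        omega
      · exact (Fin.castSucc_lt_last x).ne (Finset.mem_singleton.mp hu)
    have hc : ∀ c' ∈ f2 m P, 2 ≤ c'.card := by
      intro c' hc'
      rcases (hmemQ c').mp hc' with ⟨b, _, hb2, rfl⟩ | rfl
      · rwa [Finset.card_image_of_injective _ (Fin.castSucc_injective _)]
      · obtain ⟨t, ht⟩ := hTne
        refine Finset.one_lt_card.mpr ?_
        exact ⟨t.castSucc, Finset.mem_union_left _ (Finset.mem_image_of_mem _ ht),
          Fin.last (m+2), Finset.mem_union_right _ (Finset.mem_singleton_self _),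
          (Fin.castSucc_lt_last t).ne⟩
    refine ⟨⟨fun c' hc' => Finset.card_pos.mp (by have := hc c' hc'; omega), ?_, ?_⟩, hc⟩
    · intro b' hb' c' hc' hne'
      rw [Finset.disjoint_left]
      intro a hab hac
      rcases (hmemQ b').mp hb' with ⟨b, hb, hb2, rfl⟩ | rfl
      · rcases (hmemQ c').mp hc' with ⟨c, hcm, hc2, rfl⟩ | rfl
        · have hbc : b ≠ c := fun e => hne' (by rw [e])
          obtain ⟨x, hx, rfl⟩ := Finset.mem_image.mp hab
          obtain ⟨y, hy, hyx⟩ := Finset.mem_image.mp hac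
          have hyx' : y = x := Fin.castSucc_inj.mp hyx
          exact Finset.disjoint_left.mp (hP.2.1 b hb c hcm hbc) hx (hyx' ▸ hy)
        · exact cross b hb hb2 a hab hac
      · rcases (hmemQ c').mp hc' with ⟨c, hcm, hc2, rfl⟩ | rfl
        · exact cross c hcm hc2 a hac hab
        · exact hne' rfl
    · rw [Finset.eq_univ_iff_forall]
      intro x
      rw [Finset.mem_sup]
      rcases x.eq_castSucc_or_eq_last with ⟨y, rfl⟩ | rfl
      · obtain ⟨b, hb, hyb⟩ := exists_block hP y
        have hpos : 0 < b.card := (hP.1 b hb).card_pos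
        by_cases h2 : 2 ≤ b.card
        · exact ⟨b.image Fin.castSucc, (hmemQ _).mpr (Or.inl ⟨b, hb, h2, rfl⟩),
            Finset.mem_image_of_mem _ hyb⟩
        · have h1 : b.card = 1 := by omega
          obtain ⟨z, rfl⟩ := Finset.card_eq_one.mp h1
          have hyz : y = z := Finset.mem_singleton.mp hyb
          have hyT : y ∈ T m P := mem_T.mpr (by rw [hyz]; exact hb)
          exact ⟨B, (hmemQ _).mpr (Or.inr rfl),
            Finset.mem_union_left _ (Finset.mem_image_of_mem _ hyT)⟩
      · exact ⟨B, (hmemQ _).mpr (Or.inr rfl),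
          Finset.mem_union_right _ (Finset.mem_singleton_self _)⟩

/-- left inverse of `f2`. -/
def inv2 (m : ℕ) (Q : Finset (Finset (Fin (m+3)))) : Finset (Finset (Fin (m+2))) :=
  if (Fin.last (m+1)).castSucc ∈ (Q.filter (fun c => Fin.last (m+2) ∈ c)).sup id then
    Q.image (pre m)
  else
    (Q.filter (fun c => Fin.last (m+2) ∉ c)).image (pre m) ∪
      (pre m ((Q.filter (fun c => Fin.last (m+2) ∈ c)).sup id)).image
        (fun x => ({x} : Finset (Fin (m+2))))

lemma inv2_f2 {P : Finset (Finset (Fin (m+2)))} (hP : IsSetPartition P)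
    (hS : ({Fin.last (m+1)} : Finset (Fin (m+2))) ∉ P) : inv2 m (f2 m P) = P := by
  by_cases hE : P.filter (fun b => b.card = 1) = ∅
  · set h : Finset (Fin (m+2)) → Finset (Fin (m+3)) := fun b =>
      if Fin.last (m+1) ∈ b then b.image Fin.castSucc ∪ {Fin.last (m+2)}
      else b.image Fin.castSucc with hh
    have hf2 : f2 m P = P.image h := by rw [f2, if_pos hE]
    obtain ⟨b0, hb0, hlb0⟩ := exists_block hP (Fin.last (m+1))
    have hhb0 : h b0 = b0.image Fin.castSucc ∪ {Fin.last (m+2)} := by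
      rw [hh]
      dsimp only
      rw [if_pos hlb0]
    have hcond : (Fin.last (m+1)).castSucc ∈
        ((f2 m P).filter (fun c => Fin.last (m+2) ∈ c)).sup id := by
      rw [Finset.mem_sup]
      refine ⟨h b0, Finset.mem_filter.mpr ⟨?_, ?_⟩, ?_⟩
      · rw [hf2]
        exact Finset.mem_image_of_mem h hb0
      · rw [hhb0]
        exact Finset.mem_union_right _ (Finset.mem_singleton_self _)
      · show (Fin.last (m+1)).castSucc ∈ h b0
        rw [hhb0]
        exact Finset.mem_union_left _ (Finset.mem_image_of_mem _ hlb0)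
    rw [inv2, if_pos hcond, hf2, Finset.image_image]
    have key : ∀ b ∈ P, pre m (h b) = b := by
      intro b hb
      rw [hh]
      dsimp only
      split_ifs with hl
      · rw [pre_union, pre_image, pre_last, Finset.union_empty]
      · rw [pre_image]
    rw [show pre m ∘ h = fun b => pre m (h b) from rfl]
    rw [Finset.image_congr (fun b hb => key b hb), Finset.image_id']
  · have hTne : (T m P).Nonempty := by
      obtain ⟨b0, hb0⟩ := Finset.nonempty_of_ne_empty hE
      have hb0' := Finset.mem_filter.mp hb0
      obtain ⟨x0, rfl⟩ := Finset.card_eq_one.mp hb0'.2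
      exact ⟨x0, mem_T.mpr hb0'.1⟩
    set B : Finset (Fin (m+3)) := (T m P).image Fin.castSucc ∪ {Fin.last (m+2)} with hB
    have hf2 : f2 m P =
        (P.filter (fun b => 2 ≤ b.card)).image (fun b => b.image Fin.castSucc) ∪ {B} := by
      rw [f2, if_neg hE]
    have hmemQ : ∀ c', c' ∈ f2 m P ↔
        (∃ b ∈ P, 2 ≤ b.card ∧ b.image Fin.castSucc = c') ∨ c' = B := by
      intro c'
      rw [hf2]
      simp only [Finset.mem_union, Finset.mem_image, Finset.mem_filter,
        Finset.mem_singleton, and_assoc]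
    have hfilter : (f2 m P).filter (fun c => Fin.last (m+2) ∈ c) = {B} := by
      ext c
      simp only [Finset.mem_filter, Finset.mem_singleton]
      constructor
      · rintro ⟨hcQ, hLc⟩
        rcases (hmemQ c).mp hcQ with ⟨b, hb, hb2, rfl⟩ | rfl
        · exact absurd hLc (last_not_mem_image b)
        · rfl
      · rintro rfl
        exact ⟨(hmemQ B).mpr (Or.inr rfl),
          Finset.mem_union_right _ (Finset.mem_singleton_self _)⟩
    have hsupB : ((f2 m P).filter (fun c => Fin.last (m+2) ∈ c)).sup id = B := by
      rw [hfilter, Finset.sup_singleton]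
      rfl
    have hcond : ¬ (Fin.last (m+1)).castSucc ∈
        ((f2 m P).filter (fun c => Fin.last (m+2) ∈ c)).sup id := by
      rw [hsupB, hB]
      intro hmem
      rcases Finset.mem_union.mp hmem with hu | hu
      · obtain ⟨t, ht, hteq⟩ := Finset.mem_image.mp hu
        have htl : t = Fin.last (m+1) := Fin.castSucc_inj.mp hteq
        exact hS (mem_T.mp (htl ▸ ht))
      · exact (Fin.castSucc_lt_last _).ne (Finset.mem_singleton.mp hu)
    rw [inv2, if_neg hcond, hsupB]
    have hfilter2 : (f2 m P).filter (fun c => Fin.last (m+2) ∉ c) =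
        (P.filter (fun b => 2 ≤ b.card)).image (fun b => b.image Fin.castSucc) := by
      ext c
      simp only [Finset.mem_filter]
      constructor
      · rintro ⟨hcQ, hLc⟩
        rcases (hmemQ c).mp hcQ with ⟨b, hb, hb2, rfl⟩ | rfl
        · exact Finset.mem_image.mpr ⟨b, Finset.mem_filter.mpr ⟨hb, hb2⟩, rfl⟩
        · exact absurd (Finset.mem_union_right _ (Finset.mem_singleton_self _)) hLc
      · intro hcimg
        obtain ⟨b, hbf, rfl⟩ := Finset.mem_image.mp hcimg
        have hbf' := Finset.mem_filter.mp hbf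
        exact ⟨(hmemQ _).mpr (Or.inl ⟨b, hbf'.1, hbf'.2, rfl⟩), last_not_mem_image b⟩
    rw [hfilter2, Finset.image_image]
    have key2 : ∀ b ∈ P.filter (fun b => 2 ≤ b.card),
        (pre m ∘ fun b => b.image Fin.castSucc) b = b := fun b _ => pre_image b
    rw [Finset.image_congr (fun b hb => key2 b hb), Finset.image_id']
    have hpreB : pre m B = T m P := by
      rw [hB, pre_union, pre_image, pre_last, Finset.union_empty]
    rw [hpreB]
    have hsing : (T m P).image (fun x => ({x} : Finset (Fin (m+2)))) =
        P.filter (fun b => b.card = 1) := by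
      ext b
      simp only [Finset.mem_image, Finset.mem_filter]
      constructor
      · rintro ⟨x, hx, rfl⟩
        exact ⟨mem_T.mp hx, Finset.card_singleton x⟩
      · rintro ⟨hb, h1⟩
        obtain ⟨x, rfl⟩ := Finset.card_eq_one.mp h1
        exact ⟨x, mem_T.mpr hb, rfl⟩
    rw [hsing]
    ext b
    simp only [Finset.mem_union, Finset.mem_filter]
    constructor
    · rintro (⟨hb, _⟩ | ⟨hb, _⟩) <;> exact hb
    · intro hb
      have h1 : 0 < b.card := (hP.1 b hb).card_pos
      by_cases h2 : 2 ≤ b.card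
      · exact Or.inl ⟨hb, h2⟩
      · exact Or.inr ⟨hb, by omega⟩

end BellAux

theorem bell_le_bell_add_bellT (n : ℕ) (hn : 2 ≤ n) :
    bell n ≤ bell (n - 1) + bellT (n + 1) := by
  obtain ⟨m, rfl⟩ : ∃ m, n = m + 2 := ⟨n - 2, by omega⟩
  show bell (m+2) ≤ bell (m+1) + bellT (m+3)
  set S1 : Set (Finset (Finset (Fin (m+2)))) :=
    {P | IsSetPartition P ∧ ({Fin.last (m+1)} : Finset (Fin (m+2))) ∈ P} with hS1
  set S2 : Set (Finset (Finset (Fin (m+2)))) :=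
    {P | IsSetPartition P ∧ ({Fin.last (m+1)} : Finset (Fin (m+2))) ∉ P} with hS2
  have hsplit : {P : Finset (Finset (Fin (m+2))) | IsSetPartition P} = S1 ∪ S2 := by
    ext P
    simp only [hS1, hS2, Set.mem_setOf_eq, Set.mem_union]
    tauto
  have h1 : S1.ncard ≤ bell (m+1) := by
    apply Set.ncard_le_ncard_of_injOn (BellAux.f1 m)
    · rintro P ⟨hP, hL⟩
      exact BellAux.f1_mapsTo hP hL
    · rintro P ⟨hP, hL⟩ Q ⟨hQ, hQL⟩ h
      rw [← BellAux.inv1_f1 hP hL, ← BellAux.inv1_f1 hQ hQL, h]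
  have h2 : S2.ncard ≤ bellT (m+3) := by
    apply Set.ncard_le_ncard_of_injOn (BellAux.f2 m)
    · rintro P ⟨hP, hL⟩
      exact BellAux.f2_mapsTo hP hL
    · rintro P ⟨hP, hL⟩ Q ⟨hQ, hQL⟩ h
      rw [← BellAux.inv2_f2 hP hL, ← BellAux.inv2_f2 hQ hQL, h]
  calc bell (m+2) = (S1 ∪ S2).ncard := by rw [bell, hsplit]
    _ ≤ S1.ncard + S2.ncard := Set.ncard_union_le S1 S2
    _ ≤ bell (m+1) + bellT (m+3) := Nat.add_le_add h1 h2
end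

section
/- For every fixed positive integer c and fixed positive integer t, there exists N such that for all n ≥ N, c · B_{n-t-1} < B_{n-t} − B̃_{n-t} − B̃_{n-t-1}. -/
open Finset

open scoped Classical

noncomputable def partsF (n : ℕ) : Finset (Finset (Finset (Fin n))) :=
  univ.filter IsSetPartition

lemma bell_eq (n : ℕ) : bell n = (partsF n).card := by
  rw [bell, Set.ncard_eq_toFinset_card', Set.toFinset_setOf, partsF]

lemma bellT_eq (n : ℕ) :
    bellT n = ((partsF n).filter (fun P => ∀ b ∈ P, 2 ≤ b.card)).card := by
  rw [bellT, Set.ncard_eq_toFinset_card', Set.toFinset_setOf, partsF, filter_filter]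

lemma mem_partsF {n : ℕ} {P : Finset (Finset (Fin n))} :
    P ∈ partsF n ↔ IsSetPartition P := by simp [partsF]

section blocks
variable {n : ℕ} {P : Finset (Finset (Fin n))}

lemma exists_block (hP : IsSetPartition P) (x : Fin n) : ∃ b ∈ P, x ∈ b := by
  have : x ∈ P.sup id := hP.2.2 ▸ mem_univ x
  simpa using (Finset.mem_sup).1 this

lemma block_unique (hP : IsSetPartition P) {b c : Finset (Fin n)} {x : Fin n}
    (hb : b ∈ P) (hc : c ∈ P) (hxb : x ∈ b) (hxc : x ∈ c) : b = c := by
  by_contra h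
  simpa using (hP.2.1 b hb c hc h).le_bot (by simp [hxb, hxc] : x ∈ b ⊓ c)

end blocks

section updown
variable {n : ℕ}

def up (b : Finset (Fin n)) : Finset (Fin (n + 1)) := b.image Fin.castSucc

noncomputable def down (b : Finset (Fin (n + 1))) : Finset (Fin n) :=
  univ.filter (fun i => Fin.castSucc i ∈ b)

@[simp] lemma mem_up {b : Finset (Fin n)} {x : Fin (n + 1)} :
    x ∈ up b ↔ ∃ y ∈ b, Fin.castSucc y = x := by simp [up]

@[simp] lemma castSucc_mem_up {b : Finset (Fin n)} {y : Fin n} :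
    Fin.castSucc y ∈ up b ↔ y ∈ b := by
  simp [up, Fin.castSucc_injective n |>.eq_iff]

@[simp] lemma mem_down {b : Finset (Fin (n + 1))} {x : Fin n} :
    x ∈ down b ↔ Fin.castSucc x ∈ b := by simp [down]

lemma last_not_mem_up (b : Finset (Fin n)) : Fin.last n ∉ up b := by
  simp only [mem_up]
  rintro ⟨y, -, hy⟩
  exact (Fin.castSucc_lt_last y).ne hy

@[simp] lemma down_up (b : Finset (Fin n)) : down (up b) = b := by
  ext x; simp

lemma up_injective : Function.Injective (up (n := n)) :=
  fun a b h => by rw [← down_up a, h, down_up]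

lemma up_down {b : Finset (Fin (n + 1))} (hb : Fin.last n ∉ b) : up (down b) = b := by
  ext x
  rcases Fin.eq_castSucc_or_eq_last x with ⟨y, rfl⟩ | rfl
  · simp
  · simp only [last_not_mem_up, false_iff]
    exact hb

lemma up_card (b : Finset (Fin n)) : (up b).card = b.card :=
  card_image_of_injective _ (Fin.castSucc_injective n)

lemma up_nonempty {b : Finset (Fin n)} (hb : b.Nonempty) : (up b).Nonempty :=
  hb.image _

lemma down_nonempty {b : Finset (Fin (n + 1))} (hb : b.Nonempty) (hl : Fin.last n ∉ b) :
    (down b).Nonempty := by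
  obtain ⟨x, hx⟩ := hb
  rcases Fin.eq_castSucc_or_eq_last x with ⟨y, rfl⟩ | rfl
  · exact ⟨y, by simpa using hx⟩
  · exact absurd hx hl

lemma disjoint_up {a b : Finset (Fin n)} (h : Disjoint a b) : Disjoint (up a) (up b) :=
  Finset.disjoint_image (Fin.castSucc_injective n) |>.2 h

lemma disjoint_down {a b : Finset (Fin (n + 1))} (h : Disjoint a b) :
    Disjoint (down a) (down b) := by
  rw [Finset.disjoint_left] at h ⊢
  intro x hx hx'
  exact h (mem_down.1 hx) (mem_down.1 hx')

lemma down_card {b : Finset (Fin (n + 1))} (hb : Fin.last n ∉ b) :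
    (down b).card = b.card := by
  conv_rhs => rw [← up_down hb, up_card]

end updown

section extend
variable {n : ℕ}

def extendP (P : Finset (Finset (Fin n))) (o : Option (Finset (Fin n))) :
    Finset (Finset (Fin (n + 1))) :=
  match o with
  | none => insert {Fin.last n} (P.image up)
  | some b => insert (insert (Fin.last n) (up b)) ((P.erase b).image up)

noncomputable def restrictP (Q : Finset (Finset (Fin (n + 1)))) :
    Finset (Finset (Fin n)) := (Q.image down).erase ∅

lemma empty_not_mem {P : Finset (Finset (Fin n))} (hP : IsSetPartition P) : ∅ ∉ P :=
  fun h => by simpa using hP.1 _ h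

@[simp] lemma down_singleton_last : down ({Fin.last n} : Finset (Fin (n + 1))) = ∅ := by
  ext x; simp [(Fin.castSucc_lt_last x).ne]

@[simp] lemma down_insert_last (b : Finset (Fin n)) :
    down (insert (Fin.last n) (up b)) = b := by
  ext x
  simp only [mem_down, mem_insert, castSucc_mem_up]
  have := (Fin.castSucc_lt_last x).ne
  tauto

lemma restrict_extend {P : Finset (Finset (Fin n))} (hP : IsSetPartition P)
    {o : Option (Finset (Fin n))} (ho : o = none ∨ ∃ b ∈ P, o = some b) :
    restrictP (extendP P o) = P := by
  rcases ho with rfl | ⟨b, hb, rfl⟩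
  · rw [restrictP, extendP, image_insert, down_singleton_last]
    rw [Finset.image_image]
    have : P.image (down ∘ up) = P := by
      apply Finset.image_congr (g := id) ?_ |>.trans (image_id)
      intro x _; exact down_up x
    rw [this]
    rw [Finset.erase_insert_eq_erase, Finset.erase_eq_of_notMem (empty_not_mem hP)]
  · rw [restrictP, extendP, image_insert, down_insert_last, Finset.image_image]
    have : (P.erase b).image (down ∘ up) = P.erase b := by
      apply Finset.image_congr (g := id) ?_ |>.trans (image_id)
      intro x _; exact down_up x
    rw [this, Finset.insert_erase hb, Finset.erase_eq_of_notMem (empty_not_mem hP)]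

lemma singleton_last_mem_extend_iff {P : Finset (Finset (Fin n))} (hP : IsSetPartition P)
    {o : Option (Finset (Fin n))} (ho : o = none ∨ ∃ b ∈ P, o = some b) :
    ({Fin.last n} : Finset (Fin (n + 1))) ∈ extendP P o ↔ o = none := by
  rcases ho with rfl | ⟨b, hb, rfl⟩
  · simp [extendP]
  · simp only [extendP, mem_insert, mem_image, Option.some_ne_none, iff_false]
    rintro (h | ⟨a, ha, h⟩)
    · obtain ⟨y, hy⟩ := hP.1 b hb
      have : Fin.castSucc y ∈ ({Fin.last n} : Finset (Fin (n + 1))) := by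
        rw [h]; simp [hy]
      simpa using ((Fin.castSucc_lt_last y).ne (by simpa using this))
    · have := last_not_mem_up a
      rw [h] at this
      simp at this

lemma extend_injective {P P' : Finset (Finset (Fin n))}
    (hP : IsSetPartition P) (hP' : IsSetPartition P')
    {o o' : Option (Finset (Fin n))}
    (ho : o = none ∨ ∃ b ∈ P, o = some b) (ho' : o' = none ∨ ∃ b ∈ P', o' = some b)
    (h : extendP P o = extendP P' o') : P = P' ∧ o = o' := by
  have hPP : P = P' := by
    rw [← restrict_extend hP ho, ← restrict_extend hP' ho', h]
  subst hPP
  refine ⟨rfl, ?_⟩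
  have hsing : (o = none) ↔ (o' = none) := by
    rw [← singleton_last_mem_extend_iff hP ho, ← singleton_last_mem_extend_iff hP ho', h]
  rcases ho with rfl | ⟨b, hb, rfl⟩
  · exact (hsing.1 rfl).symm
  · rcases ho' with rfl | ⟨b', hb', rfl⟩
    · exact absurd (hsing.2 rfl) (by simp)
    · -- both some; the unique block containing last coincides
      have hmem : insert (Fin.last n) (up b) ∈ extendP P (some b') := by
        rw [← h, extendP]; exact mem_insert_self _ _
      rw [extendP] at hmem
      rcases mem_insert.1 hmem with heq | himg
      · have : b = b' := by
          have := congrArg down heq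
          rwa [down_insert_last, down_insert_last] at this
        rw [this]
      · exfalso
        obtain ⟨a, -, ha⟩ := mem_image.1 himg
        have := last_not_mem_up a
        rw [ha] at this
        simp at this

lemma extend_isPartition {P : Finset (Finset (Fin n))} (hP : IsSetPartition P)
    {o : Option (Finset (Fin n))} (ho : o = none ∨ ∃ b ∈ P, o = some b) :
    IsSetPartition (extendP P o) := by
  obtain ⟨hne, hdis, hcov⟩ := hP
  have covaux : ∀ x : Fin n, ∃ b ∈ P, x ∈ b := exists_block ⟨hne, hdis, hcov⟩
  rcases ho with rfl | ⟨b₀, hb₀, rfl⟩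
  · refine ⟨?_, ?_, ?_⟩
    · intro b hb
      rcases mem_insert.1 hb with rfl | hb
      · simp
      · obtain ⟨a, ha, rfl⟩ := mem_image.1 hb
        exact up_nonempty (hne a ha)
    · intro b hb c hc hbc
      rcases mem_insert.1 hb with rfl | hb <;> rcases mem_insert.1 hc with rfl | hc
      · exact absurd rfl hbc
      · obtain ⟨a, ha, rfl⟩ := mem_image.1 hc
        simpa [Finset.disjoint_singleton_left] using last_not_mem_up a
      · obtain ⟨a, ha, rfl⟩ := mem_image.1 hb
        simpa [Finset.disjoint_singleton_right] using last_not_mem_up a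
      · obtain ⟨a, ha, rfl⟩ := mem_image.1 hb
        obtain ⟨a', ha', rfl⟩ := mem_image.1 hc
        exact disjoint_up (hdis a ha a' ha' (fun e => hbc (by rw [e])))
    · apply Finset.eq_univ_iff_forall.2
      intro x
      rw [Finset.mem_sup]
      rcases Fin.eq_castSucc_or_eq_last x with ⟨y, rfl⟩ | rfl
      · obtain ⟨b, hb, hyb⟩ := covaux y
        exact ⟨up b, mem_insert_of_mem (mem_image_of_mem _ hb), by simpa using hyb⟩
      · exact ⟨{Fin.last n}, mem_insert_self _ _, by simp⟩
  · refine ⟨?_, ?_, ?_⟩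
    · intro b hb
      rcases mem_insert.1 hb with rfl | hb
      · exact ⟨_, mem_insert_self _ _⟩
      · obtain ⟨a, ha, rfl⟩ := mem_image.1 hb
        exact up_nonempty (hne a (mem_of_mem_erase ha))
    · intro b hb c hc hbc
      have key : ∀ a ∈ P.erase b₀, Disjoint (insert (Fin.last n) (up b₀)) (up a) := by
        intro a ha
        rw [Finset.disjoint_insert_left]
        exact ⟨last_not_mem_up a,
          disjoint_up (hdis b₀ hb₀ a (mem_of_mem_erase ha) (fun e => (mem_erase.1 ha).1 e.symm))⟩
      rcases mem_insert.1 hb with rfl | hb <;> rcases mem_insert.1 hc with rfl | hc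
      · exact absurd rfl hbc
      · obtain ⟨a, ha, rfl⟩ := mem_image.1 hc
        exact key a ha
      · obtain ⟨a, ha, rfl⟩ := mem_image.1 hb
        exact (key a ha).symm
      · obtain ⟨a, ha, rfl⟩ := mem_image.1 hb
        obtain ⟨a', ha', rfl⟩ := mem_image.1 hc
        exact disjoint_up (hdis a (mem_of_mem_erase ha) a' (mem_of_mem_erase ha')
          (fun e => hbc (by rw [e])))
    · apply Finset.eq_univ_iff_forall.2
      intro x
      rw [Finset.mem_sup]
      rcases Fin.eq_castSucc_or_eq_last x with ⟨y, rfl⟩ | rfl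
      · obtain ⟨b, hb, hyb⟩ := covaux y
        by_cases hbb : b = b₀
        · exact ⟨_, mem_insert_self _ _, by
            subst hbb; simp only [id]; exact mem_insert_of_mem (by simpa using hyb)⟩
        · exact ⟨up b, mem_insert_of_mem (mem_image_of_mem _ (mem_erase.2 ⟨hbb, hb⟩)),
            by simpa using hyb⟩
      · exact ⟨_, mem_insert_self _ _, mem_insert_self _ _⟩

end extend

lemma bell_mono : Monotone bell := by
  apply monotone_nat_of_le_succ
  intro n
  rw [bell_eq, bell_eq]
  apply Finset.card_le_card_of_injOn (fun P => extendP P none)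
  · intro P hP
    exact mem_partsF.2 (extend_isPartition (mem_partsF.1 hP) (Or.inl rfl))
  · intro P hP P' hP' h
    exact (extend_injective (mem_partsF.1 (by simpa using hP)) (mem_partsF.1 (by simpa using hP'))
      (Or.inl rfl) (Or.inl rfl) h).1

lemma many_blocks_le_bell (n K : ℕ) :
    (K + 1) * ((partsF n).filter (fun P => K ≤ P.card)).card ≤ bell (n + 1) := by
  set S := (partsF n).filter (fun P => K ≤ P.card) with hS
  set T : Finset (Finset (Finset (Fin n)) × Option (Finset (Fin n))) :=
    S.biUnion (fun P => (insert none (P.image some)).image (fun o => (P, o))) with hT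
  have memT : ∀ x ∈ T, x.1 ∈ S ∧ (x.2 = none ∨ ∃ b ∈ x.1, x.2 = some b) := by
    intro x hx
    obtain ⟨P, hP, hx⟩ := Finset.mem_biUnion.1 hx
    obtain ⟨o, ho, rfl⟩ := Finset.mem_image.1 hx
    refine ⟨hP, ?_⟩
    rcases Finset.mem_insert.1 ho with rfl | ho
    · exact Or.inl rfl
    · obtain ⟨b, hb, rfl⟩ := Finset.mem_image.1 ho
      exact Or.inr ⟨b, hb, rfl⟩
  have hcardT : (K + 1) * S.card ≤ T.card := by
    rw [hT, Finset.card_biUnion]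
    · rw [mul_comm]
      have := Finset.card_nsmul_le_sum S
        (fun P => (Finset.image (fun o => (P, o)) (insert none (Finset.image some P))).card)
        (K + 1) ?_
      · simpa [smul_eq_mul, mul_comm] using this
      intro P hP
      rw [Finset.card_image_of_injective _
        (fun a b (h : (P, a) = (P, b)) => by simpa using (Prod.ext_iff.1 h).2)]
      rw [Finset.card_insert_of_notMem (by simp),
        Finset.card_image_of_injective _ (Option.some_injective _)]
      have := (Finset.mem_filter.1 hP).2
      omega
    · intro P hP P' hP' hne
      simp only [Finset.disjoint_left]
      intro x hx hx'
      obtain ⟨o, -, rfl⟩ := Finset.mem_image.1 hx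
      obtain ⟨o', -, h⟩ := Finset.mem_image.1 hx'
      exact hne ((Prod.ext_iff.1 h).1.symm)
  refine le_trans hcardT ?_
  rw [bell_eq]
  apply Finset.card_le_card_of_injOn (fun x => extendP x.1 x.2)
  · intro x hx
    obtain ⟨hx1, hx2⟩ := memT x hx
    exact mem_partsF.2 (extend_isPartition (mem_partsF.1 (Finset.mem_filter.1 hx1).1) hx2)
  · intro x hx y hy h
    obtain ⟨hx1, hx2⟩ := memT x (by simpa using hx)
    obtain ⟨hy1, hy2⟩ := memT y (by simpa using hy)
    have := extend_injective (mem_partsF.1 (Finset.mem_filter.1 hx1).1)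
      (mem_partsF.1 (Finset.mem_filter.1 hy1).1) hx2 hy2 h
    exact Prod.ext this.1 this.2

noncomputable def fiberPartition {n K : ℕ} (f : Fin n → Fin K) : Finset (Finset (Fin n)) :=
  (univ.image (fun c : Fin K => univ.filter (fun x => f x = c))).erase ∅

lemma few_blocks_le_pow (n K : ℕ) :
    ((partsF n).filter (fun P => P.card ≤ K)).card ≤ K ^ n := by
  have h := Finset.card_le_card_of_surjOn (s := (univ : Finset (Fin n → Fin K)))
    (t := (partsF n).filter (fun P => P.card ≤ K)) fiberPartition ?_
  · refine h.trans ?_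
    simp
  intro P hPm
  simp only [Finset.coe_filter, Set.mem_setOf_eq] at hPm
  obtain ⟨hPp, hcard⟩ := hPm
  have hP := mem_partsF.1 hPp
  have hub : ∀ x : Fin n, ∃ b, b ∈ P ∧ x ∈ b := by
    intro x; obtain ⟨b, hb, hxb⟩ := exists_block hP x; exact ⟨b, hb, hxb⟩
  choose B hBmem hBx using hub
  set f : Fin n → Fin K := fun x => Fin.castLE hcard (P.equivFin ⟨B x, hBmem x⟩) with hf
  have hg : ∀ x : Fin n, univ.filter (fun y => f y = f x) = B x := by
    intro x
    ext y
    simp only [Finset.mem_filter, Finset.mem_univ, true_and]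
    constructor
    · intro h
      have : B y = B x := by
        have h2 := Fin.castLE_injective hcard h
        have h3 := P.equivFin.injective h2
        exact congrArg Subtype.val h3
      exact this ▸ hBx y
    · intro h
      have : B y = B x := block_unique hP (hBmem y) (hBmem x) (hBx y) h
      rw [hf]
      simp only
      congr 2
      exact Subtype.ext this
  refine ⟨f, by simp, ?_⟩
  rw [fiberPartition]
  ext b
  simp only [Finset.mem_erase, Finset.mem_image, Finset.mem_univ, true_and]
  constructor
  · rintro ⟨hne, c, rfl⟩
    obtain ⟨x, hx⟩ := Finset.nonempty_of_ne_empty hne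
    have hcx : f x = c := by simpa using (Finset.mem_filter.1 hx).2
    have : univ.filter (fun y => f y = c) = B x := by rw [← hcx, hg]
    rw [this]; exact hBmem x
  · intro hb
    obtain ⟨x, hx⟩ := hP.1 b hb
    have hbx : b = B x := block_unique hP hb (hBmem x) hx (hBx x)
    refine ⟨?_, f x, ?_⟩
    · rw [hbx]; exact Finset.nonempty_iff_ne_empty.1 ⟨x, hBx x⟩
    · rw [hg x, ← hbx]

section matching
variable {k : ℕ}

def mblock (k : ℕ) (i j : Fin k) : Finset (Fin (k + k)) :=
  {Fin.castAdd k i, Fin.natAdd k j}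

lemma mem_mblock {i j : Fin k} {x : Fin (k + k)} :
    x ∈ mblock k i j ↔ (x : ℕ) = i ∨ (x : ℕ) = k + j := by
  constructor
  · rintro h
    rw [mblock, Finset.mem_insert, Finset.mem_singleton] at h
    rcases h with rfl | rfl
    · left; simp
    · right; simp only [Fin.coe_natAdd]
  · rintro (h | h) <;> rw [mblock, Finset.mem_insert, Finset.mem_singleton]
    · exact Or.inl (Fin.ext (by simpa using h))
    · exact Or.inr (Fin.ext (by simp only [Fin.coe_natAdd]; omega))

def matchP (σ : Equiv.Perm (Fin k)) : Finset (Finset (Fin (k + k))) :=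
  univ.image (fun i => mblock k i (σ i))

lemma matchP_isPartition (σ : Equiv.Perm (Fin k)) : IsSetPartition (matchP σ) := by
  refine ⟨?_, ?_, ?_⟩
  · intro b hb
    obtain ⟨i, -, rfl⟩ := Finset.mem_image.1 hb
    exact ⟨_, Finset.mem_insert_self _ _⟩
  · intro b hb c hc hbc
    obtain ⟨i, -, rfl⟩ := Finset.mem_image.1 hb
    obtain ⟨j, -, rfl⟩ := Finset.mem_image.1 hc
    have hij : i ≠ j := fun h => hbc (by rw [h])
    rw [Finset.disjoint_left]
    intro x hx hx'
    rw [mem_mblock] at hx hx'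
    have hik : (i : ℕ) < k := i.isLt
    have hjk : (j : ℕ) < k := j.isLt
    have hsi : ((σ i : Fin k) : ℕ) < k := (σ i).isLt
    have hsj : ((σ j : Fin k) : ℕ) < k := (σ j).isLt
    have hvij : (i : ℕ) ≠ (j : ℕ) := fun h => hij (Fin.ext h)
    have hvsij : ((σ i : Fin k) : ℕ) ≠ ((σ j : Fin k) : ℕ) := by
      intro h
      exact hij (σ.injective (Fin.ext h))
    omega
  · apply Finset.eq_univ_iff_forall.2
    intro x
    rw [Finset.mem_sup]
    by_cases hx : (x : ℕ) < k
    · exact ⟨_, Finset.mem_image_of_mem _ (mem_univ ⟨(x : ℕ), hx⟩),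
        mem_mblock.2 (Or.inl rfl)⟩
    · push_neg at hx
      have hxk : (x : ℕ) - k < k := by omega
      set j : Fin k := ⟨(x : ℕ) - k, hxk⟩ with hj
      refine ⟨_, Finset.mem_image_of_mem _ (mem_univ (σ.symm j)), mem_mblock.2 (Or.inr ?_)⟩
      rw [σ.apply_symm_apply]
      simp only [hj]
      omega

lemma factorial_le_bell (k : ℕ) : Nat.factorial k ≤ bell (k + k) := by
  rw [bell_eq]
  have : Nat.factorial k = (univ : Finset (Equiv.Perm (Fin k))).card := by
    simp [Fintype.card_perm, Nat.factorial]
  rw [this]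
  apply Finset.card_le_card_of_injOn matchP
  · intro σ _
    exact mem_partsF.2 (matchP_isPartition σ)
  · intro σ _ τ _ h
    ext i
    have hmem : mblock k i (σ i) ∈ matchP τ := by
      rw [← h]; exact Finset.mem_image_of_mem _ (mem_univ i)
    obtain ⟨j, -, hj⟩ := Finset.mem_image.1 hmem
    have h1 : (Fin.castAdd k i : Fin (k + k)) ∈ mblock k i (σ i) :=
      Finset.mem_insert_self _ _
    rw [← hj] at h1
    have h2 : (Fin.natAdd k (σ i) : Fin (k + k)) ∈ mblock k i (σ i) := by
      rw [mblock]; simp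
    rw [← hj] at h2
    rw [mem_mblock] at h1 h2
    simp only [Fin.coe_castAdd, Fin.coe_natAdd] at h1 h2
    have hik : (i : ℕ) < k := i.isLt
    have hjk : (j : ℕ) < k := j.isLt
    have hij : (i : ℕ) = (j : ℕ) := by omega
    have : ((σ i : Fin k) : ℕ) = ((τ j : Fin k) : ℕ) := by
      have hsi : ((σ i : Fin k) : ℕ) < k := (σ i).isLt
      omega
    have hji : j = i := Fin.ext hij.symm
    subst hji
    exact this

end matching

section breaking
variable {n : ℕ} {P P' : Finset (Finset (Fin (n + 1)))}

noncomputable def breakP (P : Finset (Finset (Fin (n + 1)))) : Finset (Finset (Fin n)) :=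
  (P.filter (fun b => Fin.last n ∉ b)).image down ∪
    (univ.filter (fun x : Fin n => ∃ a ∈ P, Fin.last n ∈ a ∧ Fin.castSucc x ∈ a)).image
      (fun x => ({x} : Finset (Fin n)))

lemma mem_breakP {b : Finset (Fin n)} : b ∈ breakP P ↔
    (∃ a ∈ P, Fin.last n ∉ a ∧ down a = b) ∨
    (∃ x : Fin n, (∃ a ∈ P, Fin.last n ∈ a ∧ Fin.castSucc x ∈ a) ∧ b = {x}) := by
  simp only [breakP, Finset.mem_union, Finset.mem_image, Finset.mem_filter, Finset.mem_univ,
    true_and]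
  constructor
  · rintro (⟨a, ⟨ha, hl⟩, rfl⟩ | ⟨x, hx, rfl⟩)
    · exact Or.inl ⟨a, ha, hl, rfl⟩
    · exact Or.inr ⟨x, hx, rfl⟩
  · rintro (⟨a, ha, hl, rfl⟩ | ⟨x, hx, rfl⟩)
    · exact Or.inl ⟨a, ⟨ha, hl⟩, rfl⟩
    · exact Or.inr ⟨x, hx, rfl⟩

lemma breakP_isPartition (hP : IsSetPartition P) : IsSetPartition (breakP P) := by
  refine ⟨?_, ?_, ?_⟩
  · intro b hb
    rcases mem_breakP.1 hb with ⟨a, ha, hl, rfl⟩ | ⟨x, -, rfl⟩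
    · exact down_nonempty (hP.1 a ha) hl
    · simp
  · intro b hb c hc hbc
    rcases mem_breakP.1 hb with ⟨a, ha, hl, rfl⟩ | ⟨x, ⟨ax, hax, haxl, haxx⟩, rfl⟩ <;>
      rcases mem_breakP.1 hc with ⟨a', ha', hl', rfl⟩ | ⟨y, ⟨ay, hay, hayl, hayy⟩, rfl⟩
    · refine disjoint_down (hP.2.1 a ha a' ha' ?_)
      rintro rfl; exact hbc rfl
    · rw [Finset.disjoint_singleton_right, mem_down]
      intro hmem
      have : a = ay := block_unique hP ha hay hmem hayy
      rw [this] at hl; exact hl hayl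
    · rw [Finset.disjoint_singleton_left, mem_down]
      intro hmem
      have : a' = ax := block_unique hP ha' hax hmem haxx
      rw [this] at hl'; exact hl' haxl
    · rw [Finset.disjoint_singleton_right, Finset.mem_singleton]
      rintro rfl; exact hbc rfl
  · apply Finset.eq_univ_iff_forall.2
    intro x
    rw [Finset.mem_sup]
    obtain ⟨a, ha, hxa⟩ := exists_block hP (Fin.castSucc x)
    by_cases hl : Fin.last n ∈ a
    · exact ⟨{x}, mem_breakP.2 (Or.inr ⟨x, ⟨a, ha, hl, hxa⟩, rfl⟩), by simp⟩
    · exact ⟨down a, mem_breakP.2 (Or.inl ⟨a, ha, hl, rfl⟩), by simpa using hxa⟩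

lemma breakP_has_singleton (hP : IsSetPartition P) (h2 : ∀ b ∈ P, 2 ≤ b.card) :
    ∃ b ∈ breakP P, b.card = 1 := by
  obtain ⟨a, ha, hla⟩ := exists_block hP (Fin.last n)
  obtain ⟨y, hy, hyne⟩ := Finset.exists_mem_ne (s := a) (by have := h2 a ha; omega) (Fin.last n)
  have : y ≠ Fin.last n := hyne
  obtain ⟨x, rfl⟩ := Fin.exists_castSucc_eq.2 this
  exact ⟨{x}, mem_breakP.2 (Or.inr ⟨x, ⟨a, ha, hla, hy⟩, rfl⟩), by simp⟩

lemma singleton_mem_breakP (hP : IsSetPartition P) (h2 : ∀ b ∈ P, 2 ≤ b.card) {x : Fin n}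
    (hx : ({x} : Finset (Fin n)) ∈ breakP P) :
    ∃ a ∈ P, Fin.last n ∈ a ∧ Fin.castSucc x ∈ a := by
  rcases mem_breakP.1 hx with ⟨a, ha, hl, hda⟩ | ⟨y, hy, hxy⟩
  · exfalso
    have hc : (down a).card = a.card := down_card hl
    rw [hda] at hc
    have := h2 a ha
    simp at hc
    omega
  · have : x = y := by simpa using hxy
    subst this; exact hy

lemma breakP_injOn (hP : IsSetPartition P) (hP' : IsSetPartition P')
    (h2 : ∀ b ∈ P, 2 ≤ b.card) (h2' : ∀ b ∈ P', 2 ≤ b.card)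
    (heq : breakP P = breakP P') : P ⊆ P' := by
  intro a ha
  by_cases hl : Fin.last n ∈ a
  · -- a is the block of `last`; reconstruct it
    obtain ⟨a', ha', hla'⟩ := exists_block hP' (Fin.last n)
    have key : a = a' := by
      ext y
      rcases Fin.eq_castSucc_or_eq_last y with ⟨x, rfl⟩ | rfl
      · constructor
        · intro hy
          have hxmem : ({x} : Finset (Fin n)) ∈ breakP P' := by
            rw [← heq]; exact mem_breakP.2 (Or.inr ⟨x, ⟨a, ha, hl, hy⟩, rfl⟩)
          obtain ⟨b, hb, hbl, hbx⟩ := singleton_mem_breakP hP' h2' hxmem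
          have : b = a' := block_unique hP' hb ha' hbl hla'
          rwa [← this]
        · intro hy
          have hxmem : ({x} : Finset (Fin n)) ∈ breakP P := by
            rw [heq]; exact mem_breakP.2 (Or.inr ⟨x, ⟨a', ha', hla', hy⟩, rfl⟩)
          obtain ⟨b, hb, hbl, hbx⟩ := singleton_mem_breakP hP h2 hxmem
          have : b = a := block_unique hP hb ha hbl hl
          rwa [← this]
      · simp [hl, hla']
    rw [key]; exact ha'
  · have hmem : down a ∈ breakP P' := by
      rw [← heq]; exact mem_breakP.2 (Or.inl ⟨a, ha, hl, rfl⟩)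
    rcases mem_breakP.1 hmem with ⟨a', ha', hl', hda⟩ | ⟨x, -, hxa⟩
    · have : a = a' := by
        rw [← up_down hl, ← up_down hl', hda]
      rw [this]; exact ha'
    · exfalso
      have hc : (down a).card = a.card := down_card hl
      rw [hxa] at hc
      have := h2 a ha
      simp at hc
      omega

lemma bellT_add_bellT_le_bell (n : ℕ) : bellT (n + 1) + bellT n ≤ bell n := by
  rw [bellT_eq, bellT_eq, bell_eq]
  set X := (partsF (n + 1)).filter (fun P => ∀ b ∈ P, 2 ≤ b.card) with hX
  set Y := (partsF n).filter (fun P => ∀ b ∈ P, 2 ≤ b.card) with hY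
  have memX : ∀ P ∈ X, IsSetPartition P ∧ ∀ b ∈ P, 2 ≤ b.card := by
    intro P hP
    have := Finset.mem_filter.1 hP
    exact ⟨mem_partsF.1 this.1, this.2⟩
  have hinj : Set.InjOn breakP (X : Set (Finset (Finset (Fin (n + 1))))) := by
    intro P hP Q hQ h
    obtain ⟨hP1, hP2⟩ := memX P (by simpa using hP)
    obtain ⟨hQ1, hQ2⟩ := memX Q (by simpa using hQ)
    exact Finset.Subset.antisymm (breakP_injOn hP1 hQ1 hP2 hQ2 h)
      (breakP_injOn hQ1 hP1 hQ2 hP2 h.symm)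
  have hdisj : Disjoint (X.image breakP) Y := by
    rw [Finset.disjoint_left]
    intro Q hQ hQY
    obtain ⟨P, hP, rfl⟩ := Finset.mem_image.1 hQ
    obtain ⟨hP1, hP2⟩ := memX P hP
    obtain ⟨b, hb, hb1⟩ := breakP_has_singleton hP1 hP2
    have := (Finset.mem_filter.1 hQY).2 b hb
    omega
  have hsub : X.image breakP ∪ Y ⊆ partsF n := by
    intro Q hQ
    rcases Finset.mem_union.1 hQ with hQ | hQ
    · obtain ⟨P, hP, rfl⟩ := Finset.mem_image.1 hQ
      obtain ⟨hP1, -⟩ := memX P hP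
      exact mem_partsF.2 (breakP_isPartition hP1)
    · exact (Finset.mem_filter.1 hQ).1
  calc X.card + Y.card = (X.image breakP).card + Y.card := by
        rw [Finset.card_image_of_injOn hinj]
    _ = (X.image breakP ∪ Y).card := (Finset.card_union_of_disjoint hdisj).symm
    _ ≤ (partsF n).card := Finset.card_le_card hsub

end breaking

lemma exists_pow_le_factorial {A : ℕ} (hA : 1 ≤ A) :
    ∃ N, ∀ k ≥ N, A ^ k ≤ Nat.factorial k := by
  refine ⟨2 * A ^ 2 + 2, fun k hk => ?_⟩
  have hA2 : A ^ 2 ≤ k := by linarith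
  have h2 : A ^ 2 + (k - A ^ 2) = k := Nat.add_sub_cancel' hA2
  have h1 : Nat.factorial (A ^ 2) * (A ^ 2 + 1) ^ (k - A ^ 2) ≤ Nat.factorial k := by
    conv_rhs => rw [← h2]
    exact Nat.factorial_mul_pow_le_factorial
  calc A ^ k ≤ (A ^ 2) ^ (k - A ^ 2) := by
        rw [← pow_mul]
        have hu : A ^ 2 ≤ k - A ^ 2 := Nat.le_sub_of_add_le (by linarith)
        have hv : k - A ^ 2 + A ^ 2 = k := Nat.sub_add_cancel hA2
        exact Nat.pow_le_pow_right hA (by linarith)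
    _ ≤ (A ^ 2 + 1) ^ (k - A ^ 2) := Nat.pow_le_pow_left (by omega) _
    _ ≤ Nat.factorial (A ^ 2) * (A ^ 2 + 1) ^ (k - A ^ 2) :=
        Nat.le_mul_of_pos_left _ (Nat.factorial_pos _)
    _ ≤ Nat.factorial k := h1

lemma bell_pos (n : ℕ) : 0 < bell n := by
  rw [bell_eq]
  apply Finset.card_pos.2
  refine ⟨univ.image (fun x : Fin n => ({x} : Finset (Fin n))), mem_partsF.2 ⟨?_, ?_, ?_⟩⟩
  · intro b hb
    obtain ⟨x, -, rfl⟩ := Finset.mem_image.1 hb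
    simp
  · intro b hb c hc hbc
    obtain ⟨x, -, rfl⟩ := Finset.mem_image.1 hb
    obtain ⟨y, -, rfl⟩ := Finset.mem_image.1 hc
    simp only [Finset.disjoint_singleton_right, Finset.mem_singleton]
    rintro rfl; exact hbc rfl
  · apply Finset.eq_univ_iff_forall.2
    intro x
    rw [Finset.mem_sup]
    exact ⟨{x}, Finset.mem_image_of_mem _ (mem_univ x), by simp⟩

lemma bell_ratio {K : ℕ} (hK : 2 ≤ K) :
    ∃ M, ∀ m ≥ M, (K + 1) * bell m ≤ 2 * bell (m + 1) := by
  obtain ⟨N₀, hN₀⟩ := exists_pow_le_factorial (A := K ^ 3) (Nat.one_le_pow _ _ (by omega))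
  refine ⟨2 * N₀ + 4, fun m hm => ?_⟩
  set k := m / 2 with hk
  have hk1 : N₀ ≤ k := by omega
  have hk2 : 2 ≤ k := by omega
  have hkm : k + k ≤ m := by omega
  have hm2k : m ≤ 2 * k + 1 := by omega
  have hKm : 2 * K ^ m ≤ bell m := by
    calc 2 * K ^ m ≤ 2 * K ^ (2 * k + 1) := by
          apply Nat.mul_le_mul_left
          exact Nat.pow_le_pow_right (by omega) hm2k
      _ ≤ K ^ (2 * k + 2) := by
          have he : K ^ (2 * k + 2) = K * K ^ (2 * k + 1) := by ring
          rw [he]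
          exact Nat.mul_le_mul_right _ hK
      _ ≤ K ^ (3 * k) := Nat.pow_le_pow_right (by omega) (by omega)
      _ = (K ^ 3) ^ k := by rw [← pow_mul]
      _ ≤ Nat.factorial k := hN₀ k hk1
      _ ≤ bell (k + k) := factorial_le_bell k
      _ ≤ bell m := bell_mono hkm
  set s := ((partsF m).filter (fun P => K ≤ P.card)).card with hs
  have hsplit : bell m ≤ K ^ m + s := by
    rw [bell_eq]
    have := Finset.card_filter_add_card_filter_not
      (s := partsF m) (p := fun P => P.card ≤ K)
    have hle : ((partsF m).filter (fun P => ¬ P.card ≤ K)).card ≤ s := by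
      apply Finset.card_le_card
      intro P hP
      have := Finset.mem_filter.1 hP
      exact Finset.mem_filter.2 ⟨this.1, by omega⟩
    have hfew := few_blocks_le_pow m K
    omega
  have h2s : bell m ≤ 2 * s := by omega
  calc (K + 1) * bell m ≤ (K + 1) * (2 * s) := Nat.mul_le_mul_left _ h2s
    _ = 2 * ((K + 1) * s) := by ring
    _ ≤ 2 * bell (m + 1) := Nat.mul_le_mul_left _ (many_blocks_le_bell m K)

theorem mul_bell_lt (c t : ℕ) (hc : 0 < c) (ht : 0 < t) :
    ∃ N : ℕ, ∀ n ≥ N,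
      (c : ℤ) * (bell (n - t - 1) : ℤ) <
        (bell (n - t) : ℤ) - (bellT (n - t) : ℤ) - (bellT (n - t - 1) : ℤ) := by
  obtain ⟨M, hM⟩ := bell_ratio (K := 2 * c + 3) (by omega)
  refine ⟨M + t + 1, fun n hn => ?_⟩
  set m := n - t - 1 with hm
  have hnt : n - t = m + 1 := by omega
  rw [hnt]
  have h1 : (2 * c + 4) * bell m ≤ 2 * bell (m + 1) := hM m (by omega)
  have h2 : (c + 2) * bell m ≤ bell (m + 1) := by
    have h2a : 2 * ((c + 2) * bell m) ≤ 2 * bell (m + 1) := by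
      calc 2 * ((c + 2) * bell m) = (2 * c + 4) * bell m := by ring
        _ ≤ 2 * bell (m + 1) := h1
    exact Nat.le_of_mul_le_mul_left h2a (by omega)
  have h3 : bellT (m + 1) + bellT m ≤ bell m := bellT_add_bellT_le_bell m
  have h4 : 0 < bell m := bell_pos m
  have h2' : ((c : ℤ) + 2) * (bell m : ℤ) ≤ (bell (m + 1) : ℤ) := by exact_mod_cast h2
  have h3' : (bellT (m + 1) : ℤ) + (bellT m : ℤ) ≤ (bell m : ℤ) := by exact_mod_cast h3
  have h4' : (0 : ℤ) < (bell m : ℤ) := by exact_mod_cast h4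
  linarith
end
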